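/- If the Burge code of f is ω₁ω₂...ω_n, then the Burge code of ∂f is ω₂...ω_n; consequently Des(∂P) = (Des(P) − 1) \ {0}, i.e., the descent map satisfies Des(∂P) = Des(P) − 1 where subtracting 1 from a partition means subtracting 1 from each part and deleting zeros. -/

import Mathlib

open scoped Classical

noncomputable section

/-- `f` is a frequency sequence: `f 0 = 0` and finite support. -/
def IsFreq (f : ℕ → ℕ) : Prop := f 0 = 0 ∧ (Function.support f).Finite

/-- size `|f| = ∑ i·f i`. -/
def fsize (f : ℕ → ℕ) : ℕ := ∑ᶠ n, n * f n

/-- length `ℓ(f) = ∑ f i`. -/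
def flen (f : ℕ → ℕ) : ℕ := ∑ᶠ n, f n

/-- the support `S(f)`. -/
def suppF (f : ℕ → ℕ) : Set ℕ := {i | 1 ≤ i ∧ f i ≠ 0}

/-- `[i,j]` is a spread of `f`: a maximal interval contained in the support. -/
def IsSpread (f : ℕ → ℕ) (i j : ℕ) : Prop :=
  1 ≤ i ∧ i ≤ j ∧ (∀ k, i ≤ k → k ≤ j → f k ≠ 0) ∧ (i = 1 ∨ f (i - 1) = 0) ∧ f (j + 1) = 0

/-- `L(f)`: every other element of each spread, starting from the left end. -/
def Lset (f : ℕ → ℕ) : Set ℕ :=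
  {q | ∃ i j, IsSpread f i j ∧ i ≤ q ∧ q ≤ j ∧ (q - i) % 2 = 0}

/-- `R(f)`: every other element of each spread, starting from the right end. -/
def Rset (f : ℕ → ℕ) : Set ℕ :=
  {q | ∃ i j, IsSpread f i j ∧ i ≤ q ∧ q ≤ j ∧ (j - q) % 2 = 0}

/-- the 2-measure, as the cardinality of `R(f)`. -/
def mu2 (f : ℕ → ℕ) : ℕ := (Rset f).ncard

/-- The Burge demotion operator `∂`. -/
def dB (f : ℕ → ℕ) : ℕ → ℕ := fun n =>
  if n = 0 then 0
  else f n - (if n ∈ Rset f then 1 else 0) + (if n + 1 ∈ Rset f then 1 else 0)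

/-- The promotion operator `α`. -/
def aB (f : ℕ → ℕ) : ℕ → ℕ := fun n =>
  if n = 0 then 0
  else f n - (if n ∈ Lset f then 1 else 0) + (if n - 1 ∈ Lset f then 1 else 0)

/-- the shift `(f₂, f₃, …)`; on partitions this is `P ↦ P - 1`. -/
def tailF (f : ℕ → ℕ) : ℕ → ℕ := fun n => if n = 0 then 0 else f (n + 1)

/-- The operator `β`: `β(f) = (f₁ + 1, α(f₂, f₃, …))`. -/
def bB (f : ℕ → ℕ) : ℕ → ℕ := fun n =>
  if n = 0 then 0 else if n = 1 then f 1 + 1 else aB (tailF f) (n - 1)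

/-- the zero sequence (empty partition). -/
def zeroF : ℕ → ℕ := fun _ => 0

/-- `k` minimal with `∂^[k] f = 0`. -/
def chainK (f : ℕ → ℕ) : ℕ :=
  if h : ∃ m, dB^[m] f = zeroF then Nat.find h else 0

/-- The Burge code of `f`, as a list of letters; `false` = `a`, `true` = `b`.
The `i`-th letter (0-indexed `i`) records whether `∂^[i] f ∈ B`, i.e. `1 ∈ R(∂^[i] f)`. -/
def burgeCode (f : ℕ → ℕ) : List Bool :=
  (List.range (chainK f + 1)).map fun i => if 1 ∈ Rset (dB^[i] f) then true else false

/-- descent set of a word: 1-indexed positions `i` with `ωᵢ = b`, `ω_{i+1} = a`. -/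
def descSet (w : List Bool) : Set ℕ :=
  {i | 1 ≤ i ∧ w[i - 1]? = some true ∧ w[i]? = some false}

/-- the descent set of (the Burge code of) a partition. -/
def DesSet (f : ℕ → ℕ) : Set ℕ := descSet (burgeCode f)

/-- `Des(P)` regarded as a partition, via its frequency sequence. -/
def desFreq (f : ℕ → ℕ) : ℕ → ℕ := fun i => if i ∈ DesSet f then 1 else 0

/-- the 2-measure as the maximal size of a subset of the support without
consecutive pairs. -/
def twoMeasure (f : ℕ → ℕ) : ℕ :=
  sSup {n | ∃ T : Finset ℕ, (↑T : Set ℕ) ⊆ suppF f ∧ (∀ x ∈ T, x + 1 ∉ T) ∧ T.card = n}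

/-- evaluation at `i`: `ν_i(f) = i f_i + (i+1) f_{i+1} + 2 ∑_{j>i+1} f_j`, with `ν₀ = ν₁`. -/
def nuI (f : ℕ → ℕ) (i : ℕ) : ℕ :=
  (max i 1) * f (max i 1) + (max i 1 + 1) * f (max i 1 + 1)
    + 2 * ∑ᶠ j ∈ {j : ℕ | max i 1 + 1 < j}, f j

/-- annihilation at `i`: `ρ_i(f) = (f₁, …, f_{i-1}, f_{i+2}, f_{i+3}, …)`, with `ρ₀ = ρ₁`. -/
def rhoI (f : ℕ → ℕ) (i : ℕ) : ℕ → ℕ := fun n =>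
  if n = 0 then 0 else if n < max i 1 then f n else f (n + 2)

/-- `i ≥ 1` is right admissible in `f`. -/
def RightAdm (f : ℕ → ℕ) (i : ℕ) : Prop :=
  1 ≤ i ∧ 0 < f i ∧ (0 < f (i + 1) ∨ (f (i - 1) = 0 ∧ f (i + 1) = 0))

/-- `i ≥ 0` is left admissible in `f`. -/
def LeftAdm (f : ℕ → ℕ) (i : ℕ) : Prop :=
  0 < f (i + 1) ∧ (0 < f i ∨ (f i = 0 ∧ f (i + 2) = 0))

/-- `i` is a maximal index for `f`: `ν_i(f)` is nonzero and maximal. -/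
def MaxIdx (f : ℕ → ℕ) (i : ℕ) : Prop :=
  nuI f i ≠ 0 ∧ ∀ j, nuI f j ≤ nuI f i

end


section Aux

lemma mem_Rset_pos {f : ℕ → ℕ} {n : ℕ} (h : n ∈ Rset f) : 1 ≤ n ∧ f n ≠ 0 := by
  obtain ⟨i, j, ⟨h1, hij, hall, -, -⟩, hin, hnj, -⟩ := h
  exact ⟨h1.trans hin, hall n hin hnj⟩

lemma Rset_subset_support {f : ℕ → ℕ} : Rset f ⊆ Function.support f :=
  fun n hn => (mem_Rset_pos hn).2

lemma Rset_nonempty {f : ℕ → ℕ} (hf : IsFreq f) (hne : f ≠ zeroF) :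
    (Rset f).Nonempty := by
  have hex : ∃ n, f n ≠ 0 := by
    by_contra h
    push_neg at h
    exact hne (funext fun n => h n)
  have hfin := hf.2
  set s := hfin.toFinset with hs
  have hsne : s.Nonempty := by
    obtain ⟨n, hn⟩ := hex
    exact ⟨n, by simp [hs, Function.mem_support, hn]⟩
  set j := s.max' hsne with hj
  have hjmem : f j ≠ 0 := by
    have := s.max'_mem hsne
    simpa [hs, Function.mem_support] using this
  have hmax : ∀ n, f n ≠ 0 → n ≤ j := fun n hn =>
    s.le_max' n (by simp [hs, Function.mem_support, hn])
  have hj1 : 1 ≤ j := by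
    rcases Nat.eq_zero_or_pos j with h | h
    · exact absurd (h ▸ hjmem) (by simp [hf.1])
    · exact h
  have hjsucc : f (j + 1) = 0 := by
    by_contra h
    exact absurd (hmax _ h) (by omega)
  have hP : ∃ i, 1 ≤ i ∧ ∀ k, i ≤ k → k ≤ j → f k ≠ 0 := by
    refine ⟨j, hj1, fun k hk1 hk2 => ?_⟩
    have : k = j := le_antisymm hk2 hk1
    simpa [this] using hjmem
  classical
  set i := Nat.find hP with hi
  obtain ⟨hi1, hiall⟩ := Nat.find_spec hP
  have hij : i ≤ j := Nat.find_le ⟨hj1, fun k hk1 hk2 => by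
    have : k = j := le_antisymm hk2 hk1
    simpa [this] using hjmem⟩
  have hspread : IsSpread f i j := by
    refine ⟨hi1, hij, hiall, ?_, hjsucc⟩
    rcases Nat.lt_or_ge 1 i with h1 | h1
    · right
      by_contra h
      have : 1 ≤ i - 1 ∧ ∀ k, i - 1 ≤ k → k ≤ j → f k ≠ 0 := by
        refine ⟨by omega, fun k hk1 hk2 => ?_⟩
        rcases Nat.eq_or_lt_of_le hk1 with he | hlt
        · rw [← he]; exact h
        · exact hiall k (by omega) hk2
      exact Nat.find_min hP (by omega) this
    · left; omega
  exact ⟨j, i, j, hspread, hij, le_refl j, by simp⟩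

lemma dB_support_subset {f : ℕ → ℕ} :
    Function.support (dB f) ⊆ Function.support f ∪ (fun n => n - 1) '' Rset f := by
  intro n hn
  simp only [Function.mem_support, dB] at hn
  by_cases h0 : n = 0
  · simp [h0] at hn
  · simp only [if_neg h0] at hn
    by_cases hfn : f n = 0
    · right
      by_cases hR : n + 1 ∈ Rset f
      · exact ⟨n + 1, hR, by simp⟩
      · simp [hfn, hR] at hn
    · exact Or.inl hfn

lemma isFreq_dB {f : ℕ → ℕ} (hf : IsFreq f) : IsFreq (dB f) := by
  refine ⟨by simp [dB], Set.Finite.subset ?_ dB_support_subset⟩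
  exact (hf.2.union ((hf.2.subset Rset_subset_support).image _))

lemma fsize_dB_lt {f : ℕ → ℕ} (hf : IsFreq f) (hne : f ≠ zeroF) :
    fsize (dB f) < fsize f := by
  classical
  have hfin := hf.2
  obtain ⟨M, hM⟩ : ∃ M, ∀ n, f n ≠ 0 → n < M := by
    obtain ⟨M, hM⟩ := hfin.bddAbove
    exact ⟨M + 1, fun n hn => by
      have := hM (Function.mem_support.2 hn); omega⟩
  have hRlt : ∀ n ∈ Rset f, n < M := fun n hn => hM n (mem_Rset_pos hn).2
  set χ : ℕ → ℕ := fun n => if n ∈ Rset f then 1 else 0 with hχ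
  -- express fsize as finite sums
  have hs0 : fsize f = ∑ n ∈ Finset.range (M + 1), n * f n := by
    refine finsum_eq_sum_of_support_subset _ ?_
    intro n hn
    simp only [Function.mem_support] at hn
    have : f n ≠ 0 := fun h => hn (by simp [h])
    simp [Finset.mem_range]
    have := hM n this; omega
  have hs1 : fsize (dB f) = ∑ n ∈ Finset.range (M + 1), n * dB f n := by
    refine finsum_eq_sum_of_support_subset _ ?_
    intro n hn
    simp only [Function.mem_support] at hn
    have hd : dB f n ≠ 0 := fun h => hn (by simp [h])
    have := dB_support_subset (Function.mem_support.2 hd)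
    simp only [Finset.coe_range, Set.mem_Iio]
    rcases this with h | ⟨m, hm, hme⟩
    · have := hM n (Function.mem_support.1 h); omega
    · have hme' : m - 1 = n := hme
      have h1 := hRlt m hm
      have h2 := (mem_Rset_pos hm).1
      omega
  have key : ∀ n, n * dB f n + n * χ n = n * f n + n * χ (n + 1) := by
    intro n
    rcases Nat.eq_zero_or_pos n with h | h
    · simp [h]
    · have hn0 : n ≠ 0 := h.ne'
      simp only [dB, if_neg hn0, hχ]
      by_cases h1 : n ∈ Rset f
      · have hfn : 1 ≤ f n := Nat.one_le_iff_ne_zero.2 (mem_Rset_pos h1).2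
        obtain ⟨c, hc⟩ : ∃ c, f n = c + 1 := ⟨f n - 1, by omega⟩
        rw [hc]
        simp only [Nat.add_sub_cancel, if_pos h1]
        by_cases h2 : n + 1 ∈ Rset f <;> simp [h2] <;> ring
      · simp only [if_neg h1, Nat.sub_zero, Nat.mul_zero, Nat.add_zero]
        by_cases h2 : n + 1 ∈ Rset f <;> simp [h2] <;> ring
  have hsum : (∑ n ∈ Finset.range (M + 1), n * dB f n)
      + (∑ n ∈ Finset.range (M + 1), n * χ n)
      = (∑ n ∈ Finset.range (M + 1), n * f n)
      + (∑ n ∈ Finset.range (M + 1), n * χ (n + 1)) := by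
    rw [← Finset.sum_add_distrib, ← Finset.sum_add_distrib]
    exact Finset.sum_congr rfl fun n _ => key n
  -- B = B' + D
  have hχtop : χ (M + 1) = 0 := by
    simp only [hχ]
    rw [if_neg]
    intro h
    have := hRlt _ h; omega
  have hB : (∑ n ∈ Finset.range (M + 1), n * χ n)
      = (∑ n ∈ Finset.range (M + 1), n * χ (n + 1))
      + (∑ n ∈ Finset.range (M + 1), χ (n + 1)) := by
    have h1 : ∑ m ∈ Finset.range (M + 2), m * χ m
        = (∑ n ∈ Finset.range (M + 1), (n + 1) * χ (n + 1)) + 0 * χ 0 :=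
      Finset.sum_range_succ' _ _
    have h2 : ∑ m ∈ Finset.range (M + 2), m * χ m
        = (∑ n ∈ Finset.range (M + 1), n * χ n) + (M + 1) * χ (M + 1) :=
      Finset.sum_range_succ _ _
    have h3 : ∑ n ∈ Finset.range (M + 1), (n + 1) * χ (n + 1)
        = (∑ n ∈ Finset.range (M + 1), n * χ (n + 1))
          + (∑ n ∈ Finset.range (M + 1), χ (n + 1)) := by
      rw [← Finset.sum_add_distrib]
      exact Finset.sum_congr rfl fun n _ => by ring
    rw [hχtop] at h2
    omega
  have hD : 1 ≤ ∑ n ∈ Finset.range (M + 1), χ (n + 1) := by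
    obtain ⟨r, hr⟩ := Rset_nonempty hf hne
    have hr1 := (mem_Rset_pos hr).1
    have hrM := hRlt r hr
    have hmem : r - 1 ∈ Finset.range (M + 1) := by
      simp [Finset.mem_range]; omega
    have : χ (r - 1 + 1) = 1 := by
      have : r - 1 + 1 = r := by omega
      simp [this, hχ, hr]
    calc 1 = χ (r - 1 + 1) := this.symm
      _ ≤ _ := Finset.single_le_sum (f := fun n => χ (n + 1))
          (fun i _ => Nat.zero_le _) hmem
  rw [hs0, hs1]
  omega

lemma fsize_pos {f : ℕ → ℕ} (hf : IsFreq f) (hne : f ≠ zeroF) : 1 ≤ fsize f := by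
  have hex : ∃ n, f n ≠ 0 := by
    by_contra h
    push_neg at h
    exact hne (funext fun n => h n)
  obtain ⟨n, hn⟩ := hex
  have hn1 : 1 ≤ n := by
    rcases Nat.eq_zero_or_pos n with h | h
    · exact absurd (h ▸ hn) (by simp [hf.1])
    · exact h
  have hsupp : (Function.support fun m => m * f m).Finite :=
    hf.2.subset (by intro m hm; simp only [Function.mem_support] at *; intro h; exact hm (by simp [h]))
  have := single_le_finsum n hsupp (fun j => Nat.zero_le _)
  have hnf : 1 ≤ n * f n := by
    have : 1 ≤ f n := Nat.one_le_iff_ne_zero.2 hn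
    calc 1 = 1 * 1 := rfl
      _ ≤ n * f n := Nat.mul_le_mul hn1 this
  calc 1 ≤ n * f n := hnf
    _ ≤ fsize f := by simpa [fsize] using single_le_finsum n hsupp (fun j => Nat.zero_le _)

lemma dB_terminates : ∀ N (f : ℕ → ℕ), IsFreq f → fsize f ≤ N → ∃ m, dB^[m] f = zeroF := by
  intro N
  induction N with
  | zero =>
    intro f hf hle
    by_cases h : f = zeroF
    · exact ⟨0, h⟩
    · have := fsize_pos hf h; omega
  | succ N ih =>
    intro f hf hle
    by_cases h : f = zeroF
    · exact ⟨0, h⟩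
    · have hlt := fsize_dB_lt hf h
      obtain ⟨m, hm⟩ := ih (dB f) (isFreq_dB hf) (by omega)
      exact ⟨m + 1, by rw [Function.iterate_succ_apply]; exact hm⟩

lemma tail_get? {α : Type*} (l : List α) (n : ℕ) : l.tail[n]? = l[n + 1]? := by
  cases l <;> simp

end Aux

/-- if `Ω(f) = ω₁ω₂⋯ω_n` then `Ω(∂f) = ω₂⋯ω_n`; consequently
`Des(∂P) = (Des(P) - 1) \ {0}`. -/
theorem stmt12 (f : ℕ → ℕ) (hf : IsFreq f) (hne : f ≠ zeroF) :
    burgeCode (dB f) = (burgeCode f).tail ∧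
    DesSet (dB f) = {j | 1 ≤ j ∧ j + 1 ∈ DesSet f} := by
  classical
  have h : ∃ m, dB^[m] f = zeroF := dB_terminates (fsize f) f hf le_rfl
  set k := chainK f with hk
  have hkfind : k = Nat.find h := by rw [hk, chainK, dif_pos h]
  have hk1 : 1 ≤ k := by
    rw [hkfind]
    by_contra hc
    push_neg at hc
    have h0 : Nat.find h = 0 := by omega
    have hs := Nat.find_spec h
    rw [h0] at hs
    exact hne hs
  have h' : ∃ m, dB^[m] (dB f) = zeroF := by
    refine ⟨k - 1, ?_⟩
    rw [← Function.iterate_succ_apply]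
    have hkk : (k - 1).succ = k := by omega
    rw [hkk, hkfind]
    exact Nat.find_spec h
  have hck : chainK (dB f) = k - 1 := by
    rw [chainK, dif_pos h']
    refine (Nat.find_eq_iff h').2 ⟨?_, ?_⟩
    · rw [← Function.iterate_succ_apply]
      have hkk : (k - 1).succ = k := by omega
      rw [hkk, hkfind]
      exact Nat.find_spec h
    · intro m hm hmz
      rw [← Function.iterate_succ_apply] at hmz
      have hlt : m + 1 < Nat.find h := by omega
      exact Nat.find_min h hlt hmz
  set g : ℕ → Bool := fun i => if 1 ∈ Rset (dB^[i] f) then true else false with hg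
  have hcode : burgeCode f = (List.range (k + 1)).map g := rfl
  have hcode' : burgeCode (dB f) = (List.range k).map (g ∘ Nat.succ) := by
    rw [burgeCode, hck]
    have hkk : k - 1 + 1 = k := by omega
    rw [hkk]
    refine List.map_congr_left fun i _ => ?_
    simp only [hg, Function.comp_apply, Function.iterate_succ_apply, Nat.succ_eq_add_one]
    congr
  have htail : (burgeCode f).tail = (List.range k).map (g ∘ Nat.succ) := by
    rw [hcode, List.range_succ_eq_map, List.map_cons, List.map_map, List.tail_cons]
  have hmain : burgeCode (dB f) = (burgeCode f).tail := by rw [hcode', htail]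
  refine ⟨hmain, ?_⟩
  ext i
  simp only [DesSet, descSet, Set.mem_setOf_eq, hmain]
  constructor
  · rintro ⟨h1, h2, h3⟩
    rw [tail_get?] at h2 h3
    have hi : i - 1 + 1 = i := by omega
    rw [hi] at h2
    exact ⟨h1, by omega, by simpa using h2, h3⟩
  · rintro ⟨h1, -, h2, h3⟩
    refine ⟨h1, ?_, ?_⟩
    · rw [tail_get?]
      have hi : i - 1 + 1 = i := by omega
      rw [hi]
      simpa using h2
    · rw [tail_get?]
      exact h3
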